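/- Let K ⊆ ℤ^n satisfy K + 𝟙_n = K, and suppose that for all x, y ∈ K both ⌊(x+y)/2⌋ and ⌈(x+y)/2⌉ (coordinatewise rounding) lie in K. Then for any x, y ∈ K, the entire set Π(x,y) is contained in K. -/

import Mathlib

def PiSet {n : ℕ} (x y : Fin n → ℤ) : Set (Fin n → ℤ) :=
  {z | ∀ i j : Fin n, i < j →
    min (x i - x j) (y i - y j) ≤ z i - z j ∧ z i - z j ≤ max (x i - x j) (y i - y j)}

section Aux

variable {n : ℕ} {K : Set (Fin n → ℤ)}

lemma div2div (a m : ℤ) (hm : 0 < m) : a / 2 / m = a / (2 * m) := by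
  have h2m : (0:ℤ) < 2 * m := by linarith
  have ha : 2*m*(a/(2*m)) + a % (2*m) = a := Int.mul_ediv_add_emod a (2*m)
  set q := a/(2*m) with hq
  set r := a % (2*m) with hrdef
  have hr0 : 0 ≤ r := Int.emod_nonneg a (ne_of_gt h2m)
  have hr1 : r < 2*m := Int.emod_lt_of_pos a h2m
  have e1 : a = r + (m*q)*2 := by linarith
  have e2 : a / 2 = r / 2 + m*q := by
    rw [e1, Int.add_mul_ediv_right _ _ (by norm_num : (2:ℤ) ≠ 0)]
  have e3 : a / 2 / m = (r/2)/m + q := by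
    rw [e2]
    have : r/2 + m*q = r/2 + q*m := by ring
    rw [this, Int.add_mul_ediv_right _ _ (ne_of_gt hm)]
  have e4 : (r/2)/m = 0 := by
    apply Int.ediv_eq_zero_of_lt
    · exact Int.ediv_nonneg hr0 (by norm_num)
    · omega
  rw [e3, e4, zero_add]

lemma trK (htrans : ∀ x : Fin n → ℤ, x ∈ K ↔ x + (fun _ => 1) ∈ K)
    (c : ℤ) : ∀ p : Fin n → ℤ, p ∈ K → (fun i => p i + c) ∈ K := by
  induction c using Int.induction_on with
  | zero => intro p hp; simpa using hp
  | succ k ih =>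
      intro p hp
      have h2 := (htrans _).mp (ih p hp)
      have e : ((fun i => p i + (k:ℤ)) + (fun _ => 1)) = (fun i => p i + ((k:ℤ)+1)) := by
        funext i; simp [add_assoc]
      rwa [e] at h2
  | pred k ih =>
      intro p hp
      apply (htrans _).mpr
      have e : ((fun i => p i + (-(k:ℤ)-1)) + (fun _ => 1)) = (fun i => p i + (-(k:ℤ))) := by
        funext i; simp; ring
      rw [e]; exact ih p hp

lemma halfK (htrans : ∀ x : Fin n → ℤ, x ∈ K ↔ x + (fun _ => 1) ∈ K)
    (hmed : ∀ x ∈ K, ∀ y ∈ K,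
      (fun i => (x i + y i) / 2) ∈ K ∧ (fun i => -((-(x i + y i)) / 2)) ∈ K)
    (t : ℤ) (p q : Fin n → ℤ) (hp : p ∈ K) (hq : q ∈ K) :
    (fun i => (p i + q i + t) / 2) ∈ K := by
  obtain ⟨s, hs | hs⟩ : ∃ s, t = 2*s ∨ t = 2*s + 1 := ⟨t/2, by omega⟩
  · have h0 := (hmed p hp q hq).1
    have h1 := trK htrans s _ h0
    have e : (fun i => (p i + q i)/2 + s) = (fun i => (p i + q i + t)/2) := by
      funext i; omega
    rwa [e] at h1
  · have h0 := (hmed p hp q hq).2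
    have h1 := trK htrans s _ h0
    have e : (fun i => -((-(p i + q i))/2) + s) = (fun i => (p i + q i + t)/2) := by
      funext i; omega
    rwa [e] at h1

lemma iterK (htrans : ∀ x : Fin n → ℤ, x ∈ K ↔ x + (fun _ => 1) ∈ K)
    (hmed : ∀ x ∈ K, ∀ y ∈ K,
      (fun i => (x i + y i) / 2) ∈ K ∧ (fun i => -((-(x i + y i)) / 2)) ∈ K) :
    ∀ (k : ℕ) (T : ℤ) (p q : Fin n → ℤ), p ∈ K → q ∈ K →
      (fun i => p i + (q i - p i + T) / 2^k) ∈ K := by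
  intro k
  induction k with
  | zero =>
      intro T p q hp hq
      have h1 := trK htrans T q hq
      have e : (fun i => q i + T) = (fun i => p i + (q i - p i + T) / 2^(0:ℕ)) := by
        funext i
        have h2 : (2:ℤ)^(0:ℕ) = 1 := by norm_num
        rw [h2, Int.ediv_one]
        ring
      rwa [e] at h1
  | succ k ih =>
      intro T p q hp hq
      have hq' : (fun i => (p i + q i + (T % 2))/2) ∈ K := halfK htrans hmed (T % 2) p q hp hq
      have h1 := ih (T / 2) p _ hp hq'
      have e : (fun i => p i + ((fun i => (p i + q i + T % 2)/2) i - p i + T / 2) / 2^k)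
          = (fun i => p i + (q i - p i + T) / 2^(k+1)) := by
        funext i
        simp only []
        have e1 : (p i + q i + T % 2)/2 - p i + T / 2 = (q i - p i + T) / 2 := by omega
        rw [e1, div2div _ _ (by positivity : (0:ℤ) < (2:ℤ)^k)]
        have e2 : (2:ℤ) * 2^k = 2^(k+1) := by ring
        rw [e2]
      rwa [e] at h1

lemma edivEqOne {a d : ℤ} (hd : 0 < d) (h1 : d ≤ a) (h2 : a < 2*d) : a / d = 1 := by
  have e : a = (a - d) + 1*d := by ring
  rw [e, Int.add_mul_ediv_right _ _ (ne_of_gt hd),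
    Int.ediv_eq_zero_of_lt (by linarith) (by linarith)]
  norm_num

lemma edivEqNegOne {a d : ℤ} (hd : 0 < d) (h1 : -d ≤ a) (h2 : a < 0) : a / d = -1 := by
  have e : a = (a + d) + (-1)*d := by ring
  rw [e, Int.add_mul_ediv_right _ _ (ne_of_gt hd),
    Int.ediv_eq_zero_of_lt (by linarith) (by linarith)]
  norm_num

lemma stepUpK (htrans : ∀ x : Fin n → ℤ, x ∈ K ↔ x + (fun _ => 1) ∈ K)
    (hmed : ∀ x ∈ K, ∀ y ∈ K,
      (fun i => (x i + y i) / 2) ∈ K ∧ (fun i => -((-(x i + y i)) / 2)) ∈ K)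
    (θ : ℤ) (p q : Fin n → ℤ) (hp : p ∈ K) (hq : q ∈ K) :
    (fun i => p i + (if θ ≤ q i - p i then 1 else 0)) ∈ K := by
  obtain ⟨N, hNb⟩ : ∃ N : ℕ, ∀ i, (q i - p i - θ).natAbs ≤ N :=
    ⟨Finset.univ.sup (fun j => (q j - p j - θ).natAbs),
      fun i => Finset.le_sup (f := fun j => (q j - p j - θ).natAbs) (Finset.mem_univ i)⟩
  have hd : ((N:ℤ)) < 2^N := by exact_mod_cast (Nat.lt_two_pow_self (n := N))
  have hdpos : (0:ℤ) < 2^N := by positivity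
  have h1 := iterK htrans hmed N ((2:ℤ)^N - θ) p q hp hq
  have e : (fun i => p i + (q i - p i + ((2:ℤ)^N - θ)) / 2^N)
      = (fun i => p i + (if θ ≤ q i - p i then 1 else 0)) := by
    funext i
    have hb1 : q i - p i - θ ≤ (N:ℤ) := by have := hNb i; omega
    have hb2 : -(N:ℤ) ≤ q i - p i - θ := by have := hNb i; omega
    by_cases hc : θ ≤ q i - p i
    · rw [if_pos hc]
      congr 1
      exact edivEqOne hdpos (by linarith) (by linarith)
    · rw [if_neg hc]
      push_neg at hc
      congr 1
      exact Int.ediv_eq_zero_of_lt (by linarith) (by linarith)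
  rwa [e] at h1

lemma stepDownK (htrans : ∀ x : Fin n → ℤ, x ∈ K ↔ x + (fun _ => 1) ∈ K)
    (hmed : ∀ x ∈ K, ∀ y ∈ K,
      (fun i => (x i + y i) / 2) ∈ K ∧ (fun i => -((-(x i + y i)) / 2)) ∈ K)
    (θ : ℤ) (p q : Fin n → ℤ) (hp : p ∈ K) (hq : q ∈ K) :
    (fun i => p i - (if q i - p i ≤ θ then 1 else 0)) ∈ K := by
  obtain ⟨N, hNb⟩ : ∃ N : ℕ, ∀ i, (q i - p i - θ).natAbs ≤ N :=
    ⟨Finset.univ.sup (fun j => (q j - p j - θ).natAbs),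
      fun i => Finset.le_sup (f := fun j => (q j - p j - θ).natAbs) (Finset.mem_univ i)⟩
  have hd : ((N:ℤ)) < 2^N := by exact_mod_cast (Nat.lt_two_pow_self (n := N))
  have hdpos : (0:ℤ) < 2^N := by positivity
  have h1 := iterK htrans hmed N (-θ - 1) p q hp hq
  have e : (fun i => p i + (q i - p i + (-θ - 1)) / 2^N)
      = (fun i => p i - (if q i - p i ≤ θ then 1 else 0)) := by
    funext i
    have hb1 : q i - p i - θ ≤ (N:ℤ) := by have := hNb i; omega
    have hb2 : -(N:ℤ) ≤ q i - p i - θ := by have := hNb i; omega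
    by_cases hc : q i - p i ≤ θ
    · rw [if_pos hc]
      have : (q i - p i + (-θ - 1)) / 2^N = -1 :=
        edivEqNegOne hdpos (by linarith) (by linarith)
      rw [this]; ring
    · rw [if_neg hc]
      push_neg at hc
      have : (q i - p i + (-θ - 1)) / 2^N = 0 :=
        Int.ediv_eq_zero_of_lt (by linarith) (by linarith)
      rw [this]; ring
  rwa [e] at h1

lemma joinK (htrans : ∀ x : Fin n → ℤ, x ∈ K ↔ x + (fun _ => 1) ∈ K)
    (hmed : ∀ x ∈ K, ∀ y ∈ K,
      (fun i => (x i + y i) / 2) ∈ K ∧ (fun i => -((-(x i + y i)) / 2)) ∈ K)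
    (p q : Fin n → ℤ) (hp : p ∈ K) (hq : q ∈ K) :
    (fun i => max (p i) (q i)) ∈ K := by
  have main : ∀ k : ℕ, (fun i => p i + min (max (q i - p i) 0) (k:ℤ)) ∈ K := by
    intro k
    induction k with
    | zero =>
        have e : (fun i => p i + min (max (q i - p i) 0) ((0:ℕ):ℤ)) = p := by
          funext i; push_cast; omega
        rw [e]; exact hp
    | succ k ih =>
        have h1 := stepUpK htrans hmed 1 _ q ih hq
        have e : (fun i => (fun i => p i + min (max (q i - p i) 0) (k:ℤ)) i
            + (if 1 ≤ q i - (fun i => p i + min (max (q i - p i) 0) (k:ℤ)) i then 1 else 0))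
            = (fun i => p i + min (max (q i - p i) 0) ((k+1:ℕ):ℤ)) := by
          funext i
          simp only []
          push_cast
          split <;> omega
        rwa [e] at h1
  obtain ⟨B, hBb⟩ : ∃ B : ℕ, ∀ i, (q i - p i).toNat ≤ B :=
    ⟨Finset.univ.sup (fun j => (q j - p j).toNat),
      fun i => Finset.le_sup (f := fun j => (q j - p j).toNat) (Finset.mem_univ i)⟩
  have h1 := main B
  have e : (fun i => p i + min (max (q i - p i) 0) (B:ℤ)) = (fun i => max (p i) (q i)) := by
    funext i
    have := hBb i
    omega
  rwa [e] at h1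

lemma meetK (htrans : ∀ x : Fin n → ℤ, x ∈ K ↔ x + (fun _ => 1) ∈ K)
    (hmed : ∀ x ∈ K, ∀ y ∈ K,
      (fun i => (x i + y i) / 2) ∈ K ∧ (fun i => -((-(x i + y i)) / 2)) ∈ K)
    (p q : Fin n → ℤ) (hp : p ∈ K) (hq : q ∈ K) :
    (fun i => min (p i) (q i)) ∈ K := by
  have main : ∀ k : ℕ, (fun i => p i - min (max (p i - q i) 0) (k:ℤ)) ∈ K := by
    intro k
    induction k with
    | zero =>
        have e : (fun i => p i - min (max (p i - q i) 0) ((0:ℕ):ℤ)) = p := by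
          funext i; push_cast; omega
        rw [e]; exact hp
    | succ k ih =>
        have h1 := stepDownK htrans hmed (-1) _ q ih hq
        have e : (fun i => (fun i => p i - min (max (p i - q i) 0) (k:ℤ)) i
            - (if q i - (fun i => p i - min (max (p i - q i) 0) (k:ℤ)) i ≤ -1 then 1 else 0))
            = (fun i => p i - min (max (p i - q i) 0) ((k+1:ℕ):ℤ)) := by
          funext i
          simp only []
          push_cast
          split <;> omega
        rwa [e] at h1
  obtain ⟨B, hBb⟩ : ∃ B : ℕ, ∀ i, (p i - q i).toNat ≤ B :=
    ⟨Finset.univ.sup (fun j => (p j - q j).toNat),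
      fun i => Finset.le_sup (f := fun j => (p j - q j).toNat) (Finset.mem_univ i)⟩
  have h1 := main B
  have e : (fun i => p i - min (max (p i - q i) 0) (B:ℤ)) = (fun i => min (p i) (q i)) := by
    funext i
    have := hBb i
    omega
  rwa [e] at h1

end Aux

theorem stmt6 (n : ℕ) (K : Set (Fin n → ℤ))
    (htrans : ∀ x : Fin n → ℤ, x ∈ K ↔ x + (fun _ => 1) ∈ K)
    (hmed : ∀ x ∈ K, ∀ y ∈ K,
      (fun i => (x i + y i) / 2) ∈ K ∧ (fun i => -((-(x i + y i)) / 2)) ∈ K)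
    (x y : Fin n → ℤ) (hx : x ∈ K) (hy : y ∈ K) :
    PiSet x y ⊆ K := by
  intro z hz
  rcases Nat.eq_zero_or_pos n with h0 | hpos
  · subst h0
    have : z = x := by funext i; exact i.elim0
    rw [this]; exact hx
  · have hz' : ∀ i j, min (x i - x j) (y i - y j) ≤ z i - z j := by
      intro i j
      rcases lt_trichotomy i j with h | h | h
      · exact (hz i j h).1
      · subst h; simp
      · have h2 := (hz j i h).2
        rcases le_max_iff.mp h2 with h3 | h3
        · exact le_trans (min_le_left _ _) (by linarith)
        · exact le_trans (min_le_right _ _) (by linarith)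
    set g : Fin n → (Fin n → ℤ) :=
      fun j => fun i => min (x i + (z j - x j)) (y i + (z j - y j)) with hg
    have hgK : ∀ j, g j ∈ K := by
      intro j
      exact meetK htrans hmed _ _ (trK htrans (z j - x j) x hx) (trK htrans (z j - y j) y hy)
    have hne : (Finset.univ : Finset (Fin n)).Nonempty := ⟨⟨0, hpos⟩, Finset.mem_univ _⟩
    have hsup : Finset.univ.sup' hne g ∈ K := by
      apply Finset.sup'_induction hne g
      · intro a ha b hb
        have := joinK htrans hmed a b ha hb
        have e : (fun i => max (a i) (b i)) = a ⊔ b := by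
          funext i; rfl
        rwa [e] at this
      · intro b _; exact hgK b
    have hzeq : Finset.univ.sup' hne g = z := by
      funext i
      rw [Finset.sup'_apply]
      apply le_antisymm
      · apply Finset.sup'_le
        intro j _
        have := hz' i j
        simp only [hg]
        omega
      · have h1 := Finset.le_sup' (fun j => g j i) (Finset.mem_univ i)
        have e : g i i = z i := by simp [hg]
        rwa [e] at h1
    rwa [hzeq] at hsup
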